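/- Let x, y, d, n be integers with n ≥ 2 and gcd(x,d) = 1, and suppose (x-d)^5 + x^5 + (x+d)^5 = y^n. Set κ = gcd(x,10) and T = d^2 + x^2. Then there exist integers a and b with gcd(κ·a, b) = 1 such that x = κ^(n-1) · a^n and 7 · κ^(4n-5) · a^(4n) + b^n = (10/κ) · T^2. -/

import Mathlib

private lemma exists_pow_eq_aux (n : ℕ) (hn : n ≠ 0) (c m : ℤ) (h : Associated (c ^ n) m)
    (hm : Odd n ∨ 0 ≤ m) : ∃ c' : ℤ, c' ^ n = m := by
  obtain ⟨u, hu⟩ := h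
  rcases Int.isUnit_iff.mp u.isUnit with h1 | h1
  · exact ⟨c, by rw [← hu, h1, mul_one]⟩
  · have hm' : m = -(c ^ n) := by rw [← hu, h1]; ring
    rcases Nat.even_or_odd n with he | ho
    · rcases hm with ho | hpos
      · exact absurd ho (by simpa using he)
      · have h0 : c ^ n = 0 := le_antisymm (by omega) (he.pow_nonneg c)
        exact ⟨0, by rw [zero_pow hn]; omega⟩
    · exact ⟨-c, by rw [ho.neg_pow, ← hm']⟩

theorem stmt_7 (x y d : ℤ) (n : ℕ) (hn : 2 ≤ n) (hgcd : Int.gcd x d = 1)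
    (heq : (x - d) ^ 5 + x ^ 5 + (x + d) ^ 5 = y ^ n) :
    ∃ a b : ℤ, Int.gcd ((Int.gcd x 10 : ℤ) * a) b = 1 ∧
      x = (Int.gcd x 10 : ℤ) ^ (n - 1) * a ^ n ∧
      7 * (Int.gcd x 10 : ℤ) ^ (4 * n - 5) * a ^ (4 * n) + b ^ n =
        (10 / (Int.gcd x 10 : ℤ)) * (d ^ 2 + x ^ 2) ^ 2 := by
  have hn0 : n ≠ 0 := by omega
  set M : ℤ := 10 * d ^ 4 + 20 * d ^ 2 * x ^ 2 + 3 * x ^ 4 with hMdef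
  have hM : x * M = y ^ n := by rw [hMdef]; linear_combination heq
  have one_le_sq : ∀ z : ℤ, z ≠ 0 → 1 ≤ z ^ 2 := fun z hz => by
    nlinarith [Int.one_le_abs hz, sq_abs z, abs_nonneg z]
  have hxd : x ≠ 0 ∨ d ≠ 0 := by
    by_contra h
    push_neg at h
    rw [h.1, h.2] at hgcd
    simp at hgcd
  have hMpos : 0 < M := by
    rw [hMdef]
    rcases hxd with h | h
    · nlinarith [one_le_sq x h, sq_nonneg (d ^ 2), sq_nonneg (d * x), sq_nonneg (x ^ 2)]
    · nlinarith [one_le_sq d h, sq_nonneg (d ^ 2), sq_nonneg (d * x), sq_nonneg (x ^ 2)]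
  set K : ℤ := (Int.gcd x 10 : ℤ) with hKdef
  have hKx : K ∣ x := Int.gcd_dvd_left _ _
  have hK10 : K ∣ 10 := Int.gcd_dvd_right _ _
  have hKpos : 0 < K := by
    have : Int.gcd x 10 ≠ 0 := by
      intro h
      rw [Int.gcd_eq_zero_iff] at h
      norm_num at h
    rw [hKdef]
    exact_mod_cast Nat.pos_of_ne_zero this
  have hKM : K ∣ M := by
    obtain ⟨s, hs⟩ := hKx
    obtain ⟨t, ht⟩ := hK10
    exact ⟨t * d ^ 4 + 20 * d ^ 2 * x * s + 3 * x ^ 3 * s, by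
      rw [hMdef]; linear_combination d ^ 4 * ht + (20 * d ^ 2 * x + 3 * x ^ 3) * hs⟩
  obtain ⟨V, hV⟩ := hKM
  have hVpos : 0 < V := by
    by_contra h
    push_neg at h
    have : K * V ≤ 0 := mul_nonpos_of_nonneg_of_nonpos hKpos.le h
    omega
  -- mod facts
  have mod4 : (2 : ℤ) ∣ x → ¬((4 : ℤ) ∣ M) := by
    intro h2x h4M
    have h2d : ¬(2 : ℤ) ∣ d := by
      intro h2d
      have h1 := Int.dvd_gcd h2x h2d
      rw [hgcd] at h1
      norm_num at h1
    rw [Int.two_dvd_ne_zero, ← Int.odd_iff] at h2d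
    obtain ⟨k, hk⟩ := h2d
    obtain ⟨m, hm⟩ := h2x
    have hkey : M = 4 * (10 * (4 * (k ^ 2 + k) ^ 2 + 2 * (k ^ 2 + k)) + 20 * d ^ 2 * m ^ 2
        + 12 * m ^ 4) + 10 := by rw [hMdef, hm, hk]; ring
    obtain ⟨A, hA⟩ : ∃ A, M = 4 * A + 10 := ⟨_, hkey⟩
    omega
  have mod25 : (5 : ℤ) ∣ x → ¬((25 : ℤ) ∣ M) := by
    intro h5x h25
    have h5d : ¬(5 : ℤ) ∣ d := by
      intro h5d
      have h1 := Int.dvd_gcd h5x h5d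
      rw [hgcd] at h1
      norm_num at h1
    obtain ⟨m, hm⟩ := h5x
    have hkey : M = 25 * (20 * d ^ 2 * m ^ 2 + 75 * m ^ 4) + 10 * d ^ 4 := by
      rw [hMdef, hm]; ring
    have h10d4 : (25 : ℤ) ∣ 10 * d ^ 4 := by
      obtain ⟨w, hw⟩ := h25
      exact ⟨w - (20 * d ^ 2 * m ^ 2 + 75 * m ^ 4), by linarith⟩
    have h5d4 : (5 : ℤ) ∣ 2 * d ^ 4 := by
      obtain ⟨w, hw⟩ := h10d4
      exact ⟨w, by linarith⟩
    have hp5 : Prime (5 : ℤ) := by norm_num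
    rcases hp5.dvd_mul.mp h5d4 with h | h
    · norm_num at h
    · exact h5d (hp5.dvd_of_dvd_pow h)
  -- coprimality of x*K and V
  have hcop : Int.gcd (x * K) V = 1 := by
    by_contra hne
    obtain ⟨p, hp, hpdvd⟩ := Nat.exists_prime_and_dvd hne
    have hpI : Prime (p : ℤ) := Nat.prime_iff_prime_int.mp hp
    have hpxK : (p : ℤ) ∣ x * K := (Int.natCast_dvd_natCast.mpr hpdvd).trans (Int.gcd_dvd_left _ _)
    have hpV : (p : ℤ) ∣ V := (Int.natCast_dvd_natCast.mpr hpdvd).trans (Int.gcd_dvd_right _ _)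
    have hpx : (p : ℤ) ∣ x := by
      rcases hpI.dvd_mul.mp hpxK with h | h
      · exact h
      · exact h.trans hKx
    have hpd : ¬(p : ℤ) ∣ d := by
      intro hd
      have h1 := Int.dvd_coe_gcd hpx hd
      rw [hgcd] at h1
      exact hpI.not_dvd_one (by simpa using h1)
    have hpM : (p : ℤ) ∣ M := hV ▸ hpV.mul_left K
    have hp10 : (p : ℤ) ∣ 10 := by
      obtain ⟨s, hs⟩ := hpx
      have h2 : (p : ℤ) ∣ 20 * d ^ 2 * x ^ 2 + 3 * x ^ 4 :=
        ⟨20 * d ^ 2 * x * s + 3 * x ^ 3 * s, by linear_combination (20 * d ^ 2 * x + 3 * x ^ 3) * hs⟩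
      have h1 : (p : ℤ) ∣ 10 * d ^ 4 := by
        have he : 10 * d ^ 4 = M - (20 * d ^ 2 * x ^ 2 + 3 * x ^ 4) := by rw [hMdef]; ring
        rw [he]
        exact dvd_sub hpM h2
      rcases hpI.dvd_mul.mp h1 with h | h
      · exact h
      · exact absurd (hpI.dvd_of_dvd_pow h) hpd
    have hpK : (p : ℤ) ∣ K := Int.dvd_coe_gcd hpx hp10
    have hp2M : (p : ℤ) ^ 2 ∣ M := by
      obtain ⟨s, hs⟩ := hpK
      obtain ⟨w, hw⟩ := hpV
      exact ⟨s * w, by rw [hV, hs, hw]; ring⟩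
    have hp25 : p = 2 ∨ p = 5 := by
      have hpn : p ∣ 10 := Int.natCast_dvd_natCast.mp (by exact_mod_cast hp10)
      have h2le := hp.two_le
      have h10 := Nat.le_of_dvd (by norm_num) hpn
      interval_cases p <;> omega
    rcases hp25 with rfl | rfl
    · exact mod4 (by exact_mod_cast hpx) (by have := hp2M; norm_num at this ⊢; exact_mod_cast this)
    · exact mod25 (by exact_mod_cast hpx) (by have := hp2M; norm_num at this ⊢; exact_mod_cast this)
  have hIsCop : IsCoprime (x * K) V := Int.isCoprime_iff_gcd_eq_one.mpr hcop
  have hynV : (x * K) * V = y ^ n := by linear_combination hM - x * hV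
  obtain ⟨c, hc⟩ := exists_associated_pow_of_mul_eq_pow' hIsCop hynV
  obtain ⟨b0, hb0⟩ := exists_associated_pow_of_mul_eq_pow' hIsCop.symm
    (by linear_combination hynV : V * (x * K) = y ^ n)
  have hxnn : Odd n ∨ 0 ≤ x * K := by
    rcases Nat.even_or_odd n with he | ho
    · right
      have hy : 0 ≤ y ^ n := he.pow_nonneg y
      have hx0 : 0 ≤ x := by
        by_contra h
        push_neg at h
        nlinarith [mul_pos (neg_pos.mpr h) hMpos]
      exact mul_nonneg hx0 hKpos.le
    · exact Or.inl ho
  obtain ⟨c', hc'⟩ := exists_pow_eq_aux n hn0 c (x * K) hc hxnn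
  obtain ⟨b, hb⟩ := exists_pow_eq_aux n hn0 b0 V hb0 (Or.inr hVpos.le)
  -- K ∣ c'
  have hKc : K ∣ c' := by
    have h2 : (2 : ℤ) ∣ K → (2 : ℤ) ∣ c' := fun hh =>
      Int.prime_two.dvd_of_dvd_pow (hc' ▸ hh.trans (dvd_mul_left K x))
    have h5 : (5 : ℤ) ∣ K → (5 : ℤ) ∣ c' := fun hh =>
      (by norm_num : Prime (5 : ℤ)).dvd_of_dvd_pow (hc' ▸ hh.trans (dvd_mul_left K x))
    have hkd : Int.gcd x 10 ∣ 10 := by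
      have h' := hK10
      rw [hKdef] at h'
      exact_mod_cast h'
    have hkpos : 1 ≤ Int.gcd x 10 := by
      have : Int.gcd x 10 ≠ 0 := by
        intro h0
        rw [Int.gcd_eq_zero_iff] at h0
        norm_num at h0
      omega
    have hkle : Int.gcd x 10 ≤ 10 := Nat.le_of_dvd (by norm_num) hkd
    have hkvals : Int.gcd x 10 = 1 ∨ Int.gcd x 10 = 2 ∨ Int.gcd x 10 = 5 ∨ Int.gcd x 10 = 10 := by
      interval_cases h : (Int.gcd x 10) <;> omega
    have hcop25 : IsCoprime (2 : ℤ) 5 := Int.isCoprime_iff_gcd_eq_one.mpr (by decide)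
    rcases hkvals with h | h | h | h
    · have hK : K = 1 := by rw [hKdef, h]; norm_num
      rw [hK]; exact one_dvd _
    · have hK : K = 2 := by rw [hKdef, h]; norm_num
      rw [hK]; exact h2 (by rw [hK])
    · have hK : K = 5 := by rw [hKdef, h]; norm_num
      rw [hK]; exact h5 (by rw [hK])
    · have hK : K = 10 := by rw [hKdef, h]; norm_num
      rw [hK]
      have := hcop25.mul_dvd (h2 (by rw [hK]; norm_num)) (h5 (by rw [hK]; norm_num))
      norm_num at this
      exact this
  obtain ⟨a, ha⟩ := hKc
  have hKn : K ^ (n - 1) * K = K ^ n := by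
    rw [← pow_succ]
    congr 1
    omega
  have h1 : K ^ (n - 1) * a ^ n * K = x * K := by
    calc K ^ (n - 1) * a ^ n * K = (K ^ (n - 1) * K) * a ^ n := by ring
      _ = K ^ n * a ^ n := by rw [hKn]
      _ = (K * a) ^ n := (mul_pow K a n).symm
      _ = c' ^ n := by rw [← ha]
      _ = x * K := hc'
  have hxa : x = K ^ (n - 1) * a ^ n := (mul_right_cancel₀ (ne_of_gt hKpos) h1).symm
  have hcopab : Int.gcd (K * a) b = 1 := by
    have hpows : IsCoprime ((K * a) ^ n) (b ^ n) := by
      rw [← ha, hc', hb]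
      exact hIsCop
    exact Int.isCoprime_iff_gcd_eq_one.mp
      ((IsCoprime.pow_left_iff (by omega)).mp ((IsCoprime.pow_right_iff (by omega)).mp hpows))
  refine ⟨a, b, hcopab, hxa, ?_⟩
  apply mul_left_cancel₀ (ne_of_gt hKpos)
  have e1 : K ^ (4 * n - 5) * K = (K ^ (n - 1)) ^ 4 := by
    rw [← pow_succ, ← pow_mul]
    congr 1
    omega
  have e2 : a ^ (4 * n) = (a ^ n) ^ 4 := by
    rw [← pow_mul]
    congr 1
    omega
  have hx4 : x ^ 4 = (K ^ (n - 1)) ^ 4 * (a ^ n) ^ 4 := by rw [hxa]; ring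
  have key : K * (10 / K) = 10 := Int.mul_ediv_cancel' hK10
  have hfin : 7 * x ^ 4 + M = 10 * (d ^ 2 + x ^ 2) ^ 2 := by rw [hMdef]; ring
  rw [e2]
  linear_combination 7 * (a ^ n) ^ 4 * e1 - 7 * hx4 + K * hb - hV + hfin
    - (d ^ 2 + x ^ 2) ^ 2 * key
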